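/- Let n ≥ 1 and fix an indeterminate q. Then for all integers j ≥ 0, all b ∈ B and all μ = (μ_1,…,μ_n) ∈ ℤ^n, the unrestricted one-dimensional sum of the level-1 perfect crystal of type A_{2n}^{(2)} satisfies g_j(b,μ) = Σ_γ q^{(1/2)·Σ_{i∈B, i≠0} γ_i(γ_i−1) + Σ_{i∈B} H(b,i)·γ_i} · [j; γ]_q, where the sum is over all γ = (γ_i)_{i∈B} ∈ ℤ_{≥0}^{2n+1} with γ_k − γ_{k̄} = μ_k for 1 ≤ k ≤ n and Σ_{i∈B} γ_i = j. -/

import Mathlib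

open Finset

noncomputable section

/-- The indeterminate `q`, living in the field of rational functions `ℚ(q)`. -/
def q : RatFunc ℚ := RatFunc.X

/-- The energy function: `H(b,b') = 0` if `b ≺ b'`, `1` if `b ⪰ b'`, with the
exception `H(0,0) = 0`. -/
def H (n : ℕ) (b b' : Fin (2 * n + 1)) : ℤ :=
  if (b : ℕ) = n ∧ (b' : ℕ) = n then 0
  else if (b : ℕ) < (b' : ℕ) then 0 else 1

/-- Contents. -/
def cont (n : ℕ) (b : Fin (2 * n + 1)) (k : Fin n) : ℤ :=
  if (b : ℕ) = (k : ℕ) then 1 else if (b : ℕ) = 2 * n - (k : ℕ) then -1 else 0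

/-- The unrestricted one-dimensional sum `g_j(b,μ)`. -/
def g (n j : ℕ) (b : Fin (2 * n + 1)) (μ : Fin n → ℤ) : RatFunc ℚ :=
  ∑ p ∈ Finset.univ.filter (fun p : Fin (j + 1) → Fin (2 * n + 1) =>
      p (Fin.last j) = b ∧
      ∀ k, (∑ i : Fin j, cont n (p i.castSucc) k) = μ k),
    q ^ (∑ i : Fin j, ((i : ℤ) + 1) * H n (p i.succ) (p i.castSucc))

/-- `(q)_m = Π_{i=1}^m (1 - q^i)`. -/
def qfac (m : ℕ) : RatFunc ℚ := ∏ i ∈ Finset.range m, (1 - q ^ (i + 1))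

/-! ### Auxiliary definitions -/

def rof (n : ℕ) (b : Fin (2 * n + 1)) : ℕ := if (b : ℕ) = n then n else (b : ℕ) + 1

def gam (n : ℕ) (γ : Fin (2 * n + 1) → ℕ) (t : ℕ) : ℕ :=
  if h : t < 2 * n + 1 then γ ⟨t, h⟩ else 0

def Pn (n : ℕ) (γ : Fin (2 * n + 1) → ℕ) (r : ℕ) : ℕ := ∑ t ∈ range r, gam n γ t

def D (n : ℕ) (γ : Fin (2 * n + 1) → ℕ) : ℤ :=
  ∑ i ∈ Finset.univ.filter (fun i : Fin (2 * n + 1) => (i : ℕ) ≠ n), ((γ i).choose 2 : ℤ)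

def E (n : ℕ) (b : Fin (2 * n + 1)) (γ : Fin (2 * n + 1) → ℕ) : ℤ :=
  (∑ i ∈ Finset.univ.filter (fun i : Fin (2 * n + 1) => (i : ℕ) ≠ n),
      (γ i : ℤ) * ((γ i : ℤ) - 1)) / 2 + ∑ i, H n b i * (γ i : ℤ)

def T (n j : ℕ) (b : Fin (2 * n + 1)) (γ : Fin (2 * n + 1) → ℕ) : RatFunc ℚ :=
  q ^ E n b γ * (qfac j / ∏ i, qfac (γ i))

lemma bar_lt (n : ℕ) (k : Fin n) : 2 * n - (k : ℕ) < 2 * n + 1 := by omega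

def S (n j : ℕ) (μ : Fin n → ℤ) : Finset (Fin (2 * n + 1) → ℕ) :=
  (Finset.Nat.antidiagonalTuple (2 * n + 1) j).filter
    (fun γ => ∀ k : Fin n,
      (γ (⟨k, by have := k.isLt; omega⟩ : Fin (2 * n + 1)) : ℤ) -
        (γ (⟨2 * n - k, bar_lt n k⟩ : Fin (2 * n + 1)) : ℤ) = μ k)

def RHS (n j : ℕ) (b : Fin (2 * n + 1)) (μ : Fin n → ℤ) : RatFunc ℚ :=
  ∑ γ ∈ S n j μ, T n j b γ

/-! ### Lemmas -/

lemma rof_le (n : ℕ) (b : Fin (2 * n + 1)) : rof n b ≤ 2 * n + 1 := by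
  have := b.isLt; unfold rof; split <;> omega
lemma H_eq (n : ℕ) (b b' : Fin (2 * n + 1)) :
    H n b b' = if (b' : ℕ) < rof n b then 1 else 0 := by
  unfold H rof
  rcases eq_or_ne (b : ℕ) n with hb | hb <;> rcases eq_or_ne (b' : ℕ) n with hb' | hb' <;>
    simp [hb, hb'] <;> split <;> split <;> omega
lemma qfac_succ (m : ℕ) : qfac (m + 1) = qfac m * (1 - q ^ (m + 1)) := by
  simp [qfac, Finset.prod_range_succ]
lemma gam_val (n : ℕ) (γ : Fin (2 * n + 1) → ℕ) (i : Fin (2 * n + 1)) :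
    gam n γ (i : ℕ) = γ i := by
  simp [gam, i.isLt]
lemma choose_two (a : ℕ) : 2 * ((a.choose 2 : ℤ)) = a * (a - 1) := by
  induction a with
  | zero => simp
  | succ k ih =>
    have h : (k + 1).choose 2 = k.choose 2 + k := by
      rw [Nat.choose_succ_succ, Nat.choose_one_right, Nat.add_comm]
    push_cast [h]
    linear_combination ih
lemma choose_two_pred (a : ℕ) (ha : 1 ≤ a) :
    ((a - 1).choose 2 : ℤ) = (a.choose 2 : ℤ) - ((a : ℤ) - 1) := by
  obtain ⟨k, rfl⟩ : ∃ k, a = k + 1 := ⟨a - 1, by omega⟩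
  have h : (k + 1).choose 2 = k.choose 2 + k := by
    rw [Nat.choose_succ_succ, Nat.choose_one_right, Nat.add_comm]
  push_cast [h]
  ring
lemma E_eq (n : ℕ) (b : Fin (2 * n + 1)) (γ : Fin (2 * n + 1) → ℕ) :
    E n b γ = D n γ + (Pn n γ (rof n b) : ℤ) := by
  unfold E
  congr 1
  · have h2 : (∑ i ∈ Finset.univ.filter (fun i : Fin (2 * n + 1) => (i : ℕ) ≠ n),
        (γ i : ℤ) * ((γ i : ℤ) - 1)) = 2 * D n γ := by
      unfold D
      rw [Finset.mul_sum]
      exact Finset.sum_congr rfl fun i _ => (choose_two (γ i)).symm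
    rw [h2, Int.mul_ediv_cancel_left _ two_ne_zero]
  · calc ∑ i : Fin (2 * n + 1), H n b i * (γ i : ℤ)
        = ∑ i : Fin (2 * n + 1), (if ((i : ℕ)) < rof n b then (1 : ℤ) else 0) * (gam n γ (i : ℕ) : ℤ) := by
          refine Finset.sum_congr rfl fun i _ => ?_
          rw [H_eq, gam_val]
      _ = ∑ t ∈ range (2 * n + 1), (if t < rof n b then (1 : ℤ) else 0) * (gam n γ t : ℤ) :=
          Fin.sum_univ_eq_sum_range (fun t => (if t < rof n b then (1 : ℤ) else 0) * (gam n γ t : ℤ)) _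
      _ = ∑ t ∈ range (rof n b), (gam n γ t : ℤ) := by
          simp only [ite_mul, one_mul, zero_mul]
          rw [← Finset.sum_filter]
          congr 1
          ext t
          simp only [Finset.mem_filter, Finset.mem_range]
          have := rof_le n b
          omega
      _ = (Pn n γ (rof n b) : ℤ) := by unfold Pn; push_cast; rfl
lemma Pn_update_lt (n : ℕ) (γ : Fin (2 * n + 1) → ℕ) (b' : Fin (2 * n + 1)) (v : ℕ) (r : ℕ)
    (hr : r ≤ (b' : ℕ)) : Pn n (Function.update γ b' v) r = Pn n γ r := by
  unfold Pn
  refine Finset.sum_congr rfl fun t ht => ?_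
  rw [Finset.mem_range] at ht
  unfold gam
  split
  · next h =>
    rw [Function.update_of_ne]
    intro hc
    rw [Fin.ext_iff] at hc
    simp at hc
    omega
  · rfl
lemma E_update (n j : ℕ) (γ : Fin (2 * n + 1) → ℕ) (b' : Fin (2 * n + 1)) (hb' : 1 ≤ γ b') :
    E n b' (Function.update γ b' (γ b' - 1)) = D n γ + (Pn n γ (b' : ℕ) : ℤ) := by
  rw [E_eq]
  set δ := Function.update γ b' (γ b' - 1) with hδ
  have hD : D n δ = D n γ - (if (b' : ℕ) = n then 0 else (γ b' : ℤ) - 1) := by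
    unfold D
    by_cases hn : (b' : ℕ) = n
    · rw [if_pos hn, sub_zero]
      refine Finset.sum_congr rfl fun i hi => ?_
      rw [Finset.mem_filter] at hi
      rw [hδ, Function.update_of_ne]
      intro hc
      exact hi.2 (by rw [hc, hn])
    · rw [if_neg hn]
      have hmem : b' ∈ Finset.univ.filter (fun i : Fin (2 * n + 1) => (i : ℕ) ≠ n) := by
        simp [hn]
      have h1 : (∑ i ∈ Finset.univ.filter (fun i : Fin (2 * n + 1) => (i : ℕ) ≠ n),
          ((δ i).choose 2 : ℤ)) = ((γ b' - 1).choose 2 : ℤ) +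
            ∑ i ∈ (Finset.univ.filter (fun i : Fin (2 * n + 1) => (i : ℕ) ≠ n)).erase b',
              ((γ i).choose 2 : ℤ) := by
        rw [← Finset.add_sum_erase _ _ hmem]
        congr 1
        · rw [hδ, Function.update_self]
        · refine Finset.sum_congr rfl fun i hi => ?_
          rw [hδ, Function.update_of_ne (Finset.ne_of_mem_erase hi)]
      have h2 : (∑ i ∈ Finset.univ.filter (fun i : Fin (2 * n + 1) => (i : ℕ) ≠ n),
          ((γ i).choose 2 : ℤ)) = ((γ b').choose 2 : ℤ) +
            ∑ i ∈ (Finset.univ.filter (fun i : Fin (2 * n + 1) => (i : ℕ) ≠ n)).erase b',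
              ((γ i).choose 2 : ℤ) := (Finset.add_sum_erase _ _ hmem).symm
      rw [h1, h2, choose_two_pred _ hb']
      ring
  have hP : (Pn n δ (rof n b') : ℤ) =
      (Pn n γ (b' : ℕ) : ℤ) + (if (b' : ℕ) = n then 0 else (γ b' : ℤ) - 1) := by
    unfold rof
    by_cases hn : (b' : ℕ) = n
    · rw [if_pos hn, if_pos hn, add_zero, hδ, Pn_update_lt n γ b' _ _ (by omega), hn]
    · rw [if_neg hn, if_neg hn]
      have h1 : Pn n δ ((b' : ℕ) + 1) = Pn n δ (b' : ℕ) + gam n δ (b' : ℕ) := by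
        unfold Pn
        rw [Finset.sum_range_succ]
      have h2 : gam n δ (b' : ℕ) = γ b' - 1 := by
        unfold gam
        rw [dif_pos b'.isLt]
        rw [hδ]
        have : (⟨(b' : ℕ), b'.isLt⟩ : Fin (2 * n + 1)) = b' := by ext; rfl
        rw [this, Function.update_self]
      rw [h1, h2, hδ, Pn_update_lt n γ b' _ _ (le_refl _)]
      push_cast [hb']
      ring
  rw [hD, hP]
  ring
lemma prod_qfac_update (n : ℕ) (γ : Fin (2 * n + 1) → ℕ) (b' : Fin (2 * n + 1))
    (hb' : 1 ≤ γ b') :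
    (∏ i, qfac (Function.update γ b' (γ b' - 1) i)) * (1 - q ^ (γ b')) = ∏ i, qfac (γ i) := by
  have h1 : (∏ i, qfac (Function.update γ b' (γ b' - 1) i)) =
      qfac (γ b' - 1) * ∏ i ∈ Finset.univ.erase b', qfac (γ i) := by
    rw [← Finset.mul_prod_erase Finset.univ _ (Finset.mem_univ b')]
    congr 1
    · rw [Function.update_self]
    · refine Finset.prod_congr rfl fun i hi => ?_
      rw [Function.update_of_ne (Finset.ne_of_mem_erase hi)]
  have h2 : (∏ i, qfac (γ i)) = qfac (γ b') * ∏ i ∈ Finset.univ.erase b', qfac (γ i) :=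
    (Finset.mul_prod_erase Finset.univ _ (Finset.mem_univ b')).symm
  obtain ⟨k, hk⟩ : ∃ k, γ b' = k + 1 := ⟨γ b' - 1, by omega⟩
  rw [h1, h2, hk]
  simp only [Nat.add_sub_cancel]
  rw [qfac_succ]
  ring
lemma q_ne_zero : q ≠ 0 := RatFunc.X_ne_zero
lemma q_pow_ne_one (m : ℕ) (hm : 1 ≤ m) : q ^ m ≠ (1 : RatFunc ℚ) := by
  intro h
  have h2 : algebraMap (Polynomial ℚ) (RatFunc ℚ) (Polynomial.X ^ m) =
      algebraMap (Polynomial ℚ) (RatFunc ℚ) 1 := by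
    simpa [q, map_pow, RatFunc.algebraMap_X] using h
  have := RatFunc.algebraMap_injective ℚ h2
  have hd := congrArg Polynomial.natDegree this
  simp [Polynomial.natDegree_X_pow] at hd
  omega
lemma star (m r j : ℕ) (hr : r ≤ m) (γ' : ℕ → ℕ) (h : ∑ i ∈ range m, γ' i = j + 1) :
    ∑ t ∈ range m, (if t < r then q ^ (j + 1) else 1) *
        (q ^ (∑ i ∈ range t, γ' i) - q ^ ((∑ i ∈ range t, γ' i) + γ' t)) =
      (1 - q ^ (j + 1)) * q ^ (∑ i ∈ range r, γ' i) := by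
  set F : ℕ → RatFunc ℚ := fun t => q ^ (∑ i ∈ range t, γ' i) with hF
  have hFs : ∀ t, q ^ ((∑ i ∈ range t, γ' i) + γ' t) = F (t + 1) := by
    intro t; rw [hF]; simp [Finset.sum_range_succ]
  have split : ∀ t, (if t < r then q ^ (j + 1) else 1) * (F t - F (t+1)) =
      (F t - F (t+1)) + (if t < r then (q ^ (j+1) - 1) * (F t - F (t+1)) else 0) := by
    intro t; split <;> ring
  calc ∑ t ∈ range m, (if t < r then q ^ (j + 1) else 1) *
        (q ^ (∑ i ∈ range t, γ' i) - q ^ ((∑ i ∈ range t, γ' i) + γ' t))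
      = ∑ t ∈ range m, ((F t - F (t+1)) + (if t < r then (q ^ (j+1) - 1) * (F t - F (t+1)) else 0)) := by
        refine Finset.sum_congr rfl fun t _ => ?_
        rw [hFs t, split t]
    _ = (F 0 - F m) + ∑ t ∈ range r, (q ^ (j+1) - 1) * (F t - F (t+1)) := by
        rw [Finset.sum_add_distrib, ← Finset.sum_filter, Finset.sum_range_sub' F]
        congr 2
        ext t
        simp only [Finset.mem_filter, Finset.mem_range]
        omega
    _ = (F 0 - F m) + (q ^ (j+1) - 1) * (F 0 - F r) := by
        rw [← Finset.mul_sum, Finset.sum_range_sub' F]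
    _ = (1 - q ^ (j + 1)) * q ^ (∑ i ∈ range r, γ' i) := by
        have h0 : F 0 = 1 := by simp [hF]
        have hm : F m = q ^ (j + 1) := by rw [hF]; simp [h]
        rw [h0, hm, hF]
        ring
lemma one_sub_q_pow_ne_zero (m : ℕ) (hm : 1 ≤ m) : (1 : RatFunc ℚ) - q ^ m ≠ 0 := by
  intro h
  exact q_pow_ne_one m hm (by linear_combination -h)
lemma qfac_ne_zero (m : ℕ) : qfac m ≠ 0 := by
  induction m with
  | zero => simp [qfac]
  | succ k ih => rw [qfac_succ]; exact mul_ne_zero ih (one_sub_q_pow_ne_zero _ (by omega))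
lemma q_zpow_H (n : ℕ) (j : ℕ) (b b' : Fin (2 * n + 1)) :
    q ^ (((j : ℤ) + 1) * H n b b') = if (b' : ℕ) < rof n b then q ^ (j + 1) else 1 := by
  rw [H_eq]
  split
  · rw [mul_one]
    norm_cast
  · rw [mul_zero, zpow_zero]
lemma Tstep (n j : ℕ) (b : Fin (2 * n + 1)) (γ : Fin (2 * n + 1) → ℕ)
    (hγ : ∑ i, γ i = j + 1) :
    T n (j + 1) b γ = ∑ b' ∈ Finset.univ.filter (fun b' => 1 ≤ γ b'),
      q ^ (((j : ℤ) + 1) * H n b b') * T n j b' (Function.update γ b' (γ b' - 1)) := by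
  set c : RatFunc ℚ := qfac j / ∏ i, qfac (γ i) with hc
  -- step 1: rewrite each summand
  have hstep : ∀ b' ∈ Finset.univ.filter (fun b' => 1 ≤ γ b'),
      q ^ (((j : ℤ) + 1) * H n b b') * T n j b' (Function.update γ b' (γ b' - 1)) =
      (if (b' : ℕ) < rof n b then q ^ (j + 1) else 1) *
        (q ^ (D n γ + (Pn n γ (b' : ℕ) : ℤ)) * ((1 - q ^ (γ b')) * c)) := by
    intro b' hb'
    rw [Finset.mem_filter] at hb'
    have h1 := hb'.2
    rw [q_zpow_H]
    congr 1
    unfold T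
    rw [E_update n j γ b' h1]
    congr 1
    -- qfac j / ∏ qfac δ = (1 - q^{γ b'}) * c
    have hne : (1 : RatFunc ℚ) - q ^ (γ b') ≠ 0 := one_sub_q_pow_ne_zero _ h1
    have hprodne : (∏ i, qfac (Function.update γ b' (γ b' - 1) i)) ≠ 0 :=
      Finset.prod_ne_zero_iff.mpr fun i _ => qfac_ne_zero _
    have hγprod : (∏ i, qfac (γ i)) ≠ 0 :=
      Finset.prod_ne_zero_iff.mpr fun i _ => qfac_ne_zero _
    have key := prod_qfac_update n γ b' h1
    rw [hc, ← key]
    field_simp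
  rw [Finset.sum_congr rfl hstep]
  -- step 2: extend to the full sum (terms with γ b' = 0 vanish)
  rw [Finset.sum_filter_of_ne (by
    intro b' _ hne
    by_contra hzero
    apply hne
    have : γ b' = 0 := by omega
    rw [this]
    simp)]
  -- step 3: convert to a range sum and apply the telescoping identity
  have hval : ∀ b' : Fin (2 * n + 1),
      (if (b' : ℕ) < rof n b then q ^ (j + 1) else 1) *
        (q ^ (D n γ + (Pn n γ (b' : ℕ) : ℤ)) * ((1 - q ^ (γ b')) * c)) =
      (fun t : ℕ => (if t < rof n b then q ^ (j + 1) else 1) *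
        (q ^ (Pn n γ t) - q ^ (Pn n γ t + gam n γ t)) * (q ^ D n γ * c)) ((b' : ℕ)) := by
    intro b'
    simp only
    rw [zpow_add₀ q_ne_zero, zpow_natCast, gam_val]
    rw [pow_add]
    ring
  rw [Finset.sum_congr rfl (fun b' _ => hval b')]
  rw [Fin.sum_univ_eq_sum_range
    (fun t => (if t < rof n b then q ^ (j + 1) else 1) *
      (q ^ (Pn n γ t) - q ^ (Pn n γ t + gam n γ t)) * (q ^ D n γ * c))]
  rw [← Finset.sum_mul]
  have hsum : ∑ t ∈ range (2 * n + 1), gam n γ t = j + 1 := by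
    rw [← hγ]
    rw [← Fin.sum_univ_eq_sum_range (fun t => gam n γ t)]
    exact Finset.sum_congr rfl fun i _ => gam_val n γ i
  have hstar := star (2 * n + 1) (rof n b) j (rof_le n b) (gam n γ) hsum
  have : ∑ t ∈ range (2 * n + 1), (if t < rof n b then q ^ (j + 1) else 1) *
      (q ^ (Pn n γ t) - q ^ (Pn n γ t + gam n γ t)) =
      (1 - q ^ (j + 1)) * q ^ (Pn n γ (rof n b)) := hstar
  rw [this]
  -- step 4: identify with T n (j+1) b γ
  unfold T
  rw [E_eq, qfac_succ, zpow_add₀ q_ne_zero, zpow_natCast, hc]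
  field_simp
lemma mem_S (n j : ℕ) (μ : Fin n → ℤ) (γ : Fin (2 * n + 1) → ℕ) :
    γ ∈ S n j μ ↔ (∑ i, γ i = j) ∧ ∀ k : Fin n,
      (γ (⟨k, by have := k.isLt; omega⟩ : Fin (2 * n + 1)) : ℤ) -
        (γ (⟨2 * n - k, bar_lt n k⟩ : Fin (2 * n + 1)) : ℤ) = μ k := by
  unfold S
  rw [Finset.mem_filter, Finset.Nat.mem_antidiagonalTuple]
lemma sum_update_sub (m : ℕ) (γ : Fin m → ℕ) (b' : Fin m) (h1 : 1 ≤ γ b') :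
    ∑ i, Function.update γ b' (γ b' - 1) i = (∑ i, γ i) - 1 := by
  rw [Finset.sum_update_of_mem (Finset.mem_univ b')]
  have h2 : γ b' + ∑ i ∈ Finset.univ.erase b', γ i = ∑ i, γ i :=
    Finset.add_sum_erase _ _ (Finset.mem_univ b')
  rw [← Finset.erase_eq] at *
  omega
lemma sum_update_add (m : ℕ) (γ : Fin m → ℕ) (b' : Fin m) :
    ∑ i, Function.update γ b' (γ b' + 1) i = (∑ i, γ i) + 1 := by
  rw [Finset.sum_update_of_mem (Finset.mem_univ b')]
  have h2 : γ b' + ∑ i ∈ Finset.univ.erase b', γ i = ∑ i, γ i :=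
    Finset.add_sum_erase _ _ (Finset.mem_univ b')
  rw [← Finset.erase_eq] at *
  omega
lemma update_cast {m : ℕ} (γ : Fin m → ℕ) (b' : Fin m) (v : ℕ) (d : ℤ)
    (hup : (v : ℤ) - (γ b' : ℤ) = d) (x : Fin m) :
    ((Function.update γ b' v) x : ℤ) = (γ x : ℤ) + (if (x : ℕ) = (b' : ℕ) then d else 0) := by
  rcases eq_or_ne x b' with rfl | hx
  · rw [Function.update_self, if_pos rfl]
    omega
  · rw [Function.update_of_ne hx, if_neg (fun h => hx (Fin.ext h))]
    omega
lemma cont_update_cond (n : ℕ) (μ : Fin n → ℤ) (γ : Fin (2 * n + 1) → ℕ)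
    (b' : Fin (2 * n + 1)) (v : ℕ) (d : ℤ) (k : Fin n)
    (hup : ((v : ℤ)) - (γ b' : ℤ) = d)
    (hcond : (γ (⟨k, by have := k.isLt; omega⟩ : Fin (2 * n + 1)) : ℤ) -
        (γ (⟨2 * n - k, bar_lt n k⟩ : Fin (2 * n + 1)) : ℤ) = μ k) :
    ((Function.update γ b' v) (⟨k, by have := k.isLt; omega⟩ : Fin (2 * n + 1)) : ℤ) -
        ((Function.update γ b' v) (⟨2 * n - k, bar_lt n k⟩ : Fin (2 * n + 1)) : ℤ)
      = μ k + d * cont n b' k := by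
  have hk : (k : ℕ) < n := k.isLt
  simp only [update_cast γ b' v d hup]
  unfold cont
  split_ifs <;> omega
lemma reindex (n j : ℕ) (μ : Fin n → ℤ) (b' : Fin (2 * n + 1))
    (f : (Fin (2 * n + 1) → ℕ) → RatFunc ℚ) :
    ∑ γ ∈ (S n (j + 1) μ).filter (fun γ => 1 ≤ γ b'), f γ
      = ∑ δ ∈ S n j (fun k => μ k - cont n b' k), f (Function.update δ b' (δ b' + 1)) := by
  refine Finset.sum_nbij' (fun γ => Function.update γ b' (γ b' - 1))
    (fun δ => Function.update δ b' (δ b' + 1)) ?_ ?_ ?_ ?_ ?_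
  · intro γ hγ
    rw [Finset.mem_filter, mem_S] at hγ
    obtain ⟨⟨hsum, hcond⟩, h1⟩ := hγ
    rw [mem_S]
    constructor
    · rw [sum_update_sub _ _ _ h1, hsum]
      omega
    · intro k
      have h := cont_update_cond n μ γ b' (γ b' - 1) (-1) k (by push_cast [h1]; omega) (hcond k)
      rw [h]
      ring
  · intro δ hδ
    rw [mem_S] at hδ
    obtain ⟨hsum, hcond⟩ := hδ
    rw [Finset.mem_filter, mem_S]
    refine ⟨⟨?_, ?_⟩, ?_⟩
    · rw [sum_update_add, hsum]
    · intro k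
      have h := cont_update_cond n (fun k => μ k - cont n b' k) δ b' (δ b' + 1) 1 k
        (by push_cast; omega) (hcond k)
      rw [h]
      ring
    · simp
  · intro γ hγ
    rw [Finset.mem_filter] at hγ
    have h1 := hγ.2
    funext x
    rcases eq_or_ne x b' with rfl | hx
    · simp only [Function.update_self]
      omega
    · simp [Function.update_of_ne hx]
  · intro δ hδ
    funext x
    rcases eq_or_ne x b' with rfl | hx
    · simp only [Function.update_self]
      omega
    · simp [Function.update_of_ne hx]
  · intro γ hγ
    rw [Finset.mem_filter] at hγ
    have h1 := hγ.2
    congr 1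
    funext x
    rcases eq_or_ne x b' with rfl | hx
    · simp only [Function.update_self]
      omega
    · simp [Function.update_of_ne hx]

lemma g_succ (n j : ℕ) (b : Fin (2 * n + 1)) (μ : Fin n → ℤ) :
    g n (j + 1) b μ = ∑ b' : Fin (2 * n + 1),
      q ^ (((j : ℤ) + 1) * H n b b') * g n j b' (fun k => μ k - cont n b' k) := by
  classical
  unfold g
  simp only [Finset.mul_sum]
  rw [Finset.sum_sigma']
  refine (Finset.sum_bij'
    (fun (x : Σ _ : Fin (2 * n + 1), Fin (j + 1) → Fin (2 * n + 1)) _ => Fin.snoc x.2 b)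
    (fun p _ => ⟨p ((Fin.last j).castSucc), Fin.init p⟩) ?_ ?_ ?_ ?_ ?_).symm
  · -- maps into target
    rintro ⟨b', p'⟩ hx
    simp only [Finset.mem_sigma, Finset.mem_univ, Finset.mem_filter, true_and] at hx ⊢
    obtain ⟨hlast, hcont⟩ := hx
    constructor
    · exact Fin.snoc_last _ _
    · intro k
      have : ∀ i : Fin (j + 1), (Fin.snoc p' b : Fin (j+2) → Fin (2*n+1)) i.castSucc = p' i :=
        fun i => Fin.snoc_castSucc _ _ _
      calc ∑ i : Fin (j + 1), cont n ((Fin.snoc p' b : Fin (j+2) → _) i.castSucc) k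
          = ∑ i : Fin (j + 1), cont n (p' i) k := by
            exact Finset.sum_congr rfl fun i _ => by rw [this i]
        _ = (∑ i : Fin j, cont n (p' i.castSucc) k) + cont n (p' (Fin.last j)) k :=
            Fin.sum_univ_castSucc _
        _ = μ k := by rw [hcont k, hlast]; ring
  · -- inverse maps into source
    intro p hp
    simp only [Finset.mem_filter, Finset.mem_univ, true_and] at hp
    obtain ⟨hlast, hcont⟩ := hp
    simp only [Finset.mem_sigma, Finset.mem_univ, Finset.mem_filter, true_and]
    constructor
    · rfl
    · intro k
      have h1 : ∑ i : Fin (j + 1), cont n (p i.castSucc) k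
          = (∑ i : Fin j, cont n (p i.castSucc.castSucc) k) + cont n (p ((Fin.last j).castSucc)) k :=
        Fin.sum_univ_castSucc _
      have h2 : ∀ i : Fin j, (Fin.init p) i.castSucc = p i.castSucc.castSucc := fun i => rfl
      rw [hcont k] at h1
      calc ∑ i : Fin j, cont n ((Fin.init p) i.castSucc) k
          = ∑ i : Fin j, cont n (p i.castSucc.castSucc) k :=
            Finset.sum_congr rfl fun i _ => by rw [h2 i]
        _ = μ k - cont n (p ((Fin.last j).castSucc)) k := by linarith [h1]
  · -- left inverse
    rintro ⟨b', p'⟩ hx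
    simp only [Finset.mem_sigma, Finset.mem_univ, Finset.mem_filter, true_and] at hx
    refine Sigma.ext ?_ ?_
    · simpa [Fin.snoc_castSucc] using hx.1
    · simp [Fin.init_snoc]
  · -- right inverse
    intro p hp
    simp only [Finset.mem_filter, Finset.mem_univ, true_and] at hp
    simpa [hp.1] using Fin.snoc_init_self p
  · -- values agree
    rintro ⟨b', p'⟩ hx
    simp only [Finset.mem_sigma, Finset.mem_univ, Finset.mem_filter, true_and] at hx
    obtain ⟨hlast, -⟩ := hx
    have key : (∑ i : Fin (j + 1), ((i : ℤ) + 1) *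
          H n ((Fin.snoc p' b : Fin (j+2) → _) i.succ) ((Fin.snoc p' b : Fin (j+2) → _) i.castSucc))
        = (∑ i : Fin j, ((i : ℤ) + 1) * H n (p' i.succ) (p' i.castSucc))
          + ((j : ℤ) + 1) * H n b b' := by
      rw [Fin.sum_univ_castSucc]
      congr 1
      · refine Finset.sum_congr rfl fun i _ => ?_
        rw [Fin.succ_castSucc, Fin.snoc_castSucc, Fin.snoc_castSucc, Fin.coe_castSucc]
      · rw [Fin.succ_last, Fin.snoc_last]
        have : (Fin.snoc p' b : Fin (j+2) → _) (Fin.last j).castSucc = b' := by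
          rw [Fin.snoc_castSucc, hlast]
        rw [this]
        simp
    rw [key, zpow_add₀ q_ne_zero, mul_comm]

/-! ### The recursion for the right-hand side -/

lemma RHS_succ (n j : ℕ) (b : Fin (2 * n + 1)) (μ : Fin n → ℤ) :
    RHS n (j + 1) b μ = ∑ b' : Fin (2 * n + 1),
      q ^ (((j : ℤ) + 1) * H n b b') * RHS n j b' (fun k => μ k - cont n b' k) := by
  unfold RHS
  calc ∑ γ ∈ S n (j + 1) μ, T n (j + 1) b γ
      = ∑ γ ∈ S n (j + 1) μ, ∑ b' ∈ Finset.univ.filter (fun b' => 1 ≤ γ b'),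
          q ^ (((j : ℤ) + 1) * H n b b') * T n j b' (Function.update γ b' (γ b' - 1)) := by
        refine Finset.sum_congr rfl fun γ hγ => ?_
        exact Tstep n j b γ ((mem_S _ _ _ _).1 hγ).1
    _ = ∑ γ ∈ S n (j + 1) μ, ∑ b' : Fin (2 * n + 1), (if 1 ≤ γ b' then
          q ^ (((j : ℤ) + 1) * H n b b') * T n j b' (Function.update γ b' (γ b' - 1)) else 0) := by
        refine Finset.sum_congr rfl fun γ _ => ?_
        rw [Finset.sum_filter]
    _ = ∑ b' : Fin (2 * n + 1), ∑ γ ∈ S n (j + 1) μ, (if 1 ≤ γ b' then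
          q ^ (((j : ℤ) + 1) * H n b b') * T n j b' (Function.update γ b' (γ b' - 1)) else 0) :=
        Finset.sum_comm
    _ = ∑ b' : Fin (2 * n + 1), ∑ γ ∈ (S n (j + 1) μ).filter (fun γ => 1 ≤ γ b'),
          q ^ (((j : ℤ) + 1) * H n b b') * T n j b' (Function.update γ b' (γ b' - 1)) := by
        refine Finset.sum_congr rfl fun b' _ => (Finset.sum_filter _ _).symm
    _ = ∑ b' : Fin (2 * n + 1), ∑ δ ∈ S n j (fun k => μ k - cont n b' k),
          q ^ (((j : ℤ) + 1) * H n b b') * T n j b' δ := by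
        refine Finset.sum_congr rfl fun b' _ => ?_
        rw [reindex n j μ b'
          (fun γ => q ^ (((j : ℤ) + 1) * H n b b') * T n j b' (Function.update γ b' (γ b' - 1)))]
        refine Finset.sum_congr rfl fun δ hδ => ?_
        congr 2
        funext x
        rcases eq_or_ne x b' with rfl | hx
        · simp only [Function.update_self]
          omega
        · simp [Function.update_of_ne hx]
    _ = ∑ b' : Fin (2 * n + 1),
          q ^ (((j : ℤ) + 1) * H n b b') * RHS n j b' (fun k => μ k - cont n b' k) := by
        refine Finset.sum_congr rfl fun b' _ => ?_
        rw [RHS, Finset.mul_sum]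

/-! ### Base cases and the main theorem -/

lemma g_zero (n : ℕ) (b : Fin (2 * n + 1)) (μ : Fin n → ℤ) :
    g n 0 b μ = if ∀ k, μ k = 0 then 1 else 0 := by
  unfold g
  by_cases h : ∀ k, μ k = 0
  · rw [if_pos h]
    have hset : (Finset.univ.filter (fun p : Fin 1 → Fin (2 * n + 1) =>
        p (Fin.last 0) = b ∧ ∀ k, (∑ i : Fin 0, cont n (p i.castSucc) k) = μ k))
        = {fun _ => b} := by
      ext p
      simp only [Finset.mem_filter, Finset.mem_univ, true_and, Finset.mem_singleton]
      constructor
      · rintro ⟨h1, -⟩; funext i; rw [Subsingleton.elim i (Fin.last 0), h1]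
      · rintro rfl
        exact ⟨rfl, fun k => by simpa using (h k).symm⟩
    rw [hset]
    simp
  · rw [if_neg h]
    apply Finset.sum_eq_zero
    intro p hp
    simp only [Finset.mem_filter, Finset.mem_univ, true_and] at hp
    exact absurd (fun k => by simpa using (hp.2 k).symm) h

lemma RHS_zero (n : ℕ) (b : Fin (2 * n + 1)) (μ : Fin n → ℤ) :
    RHS n 0 b μ = if ∀ k, μ k = 0 then 1 else 0 := by
  unfold RHS S
  rw [Finset.Nat.antidiagonalTuple_zero_right, Finset.filter_singleton]
  by_cases h : ∀ k, μ k = 0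
  · rw [if_pos h, if_pos (fun k => by simpa using (h k).symm), Finset.sum_singleton]
    unfold T E qfac
    simp [H]
  · rw [if_neg h, if_neg, Finset.sum_empty]
    intro hc
    exact h (fun k => by simpa using (hc k).symm)

/-- the `q`-multinomial formula for the unrestricted one-dimensional sum of
the level-1 perfect crystal of type `A_{2n}^{(2)}`.  The first sum in the exponent runs
over `i ∈ B` with `i ≠ 0` (i.e. over positions `≠ n`). -/
theorem statement4 (n : ℕ) (hn : 1 ≤ n) (j : ℕ) (b : Fin (2 * n + 1)) (μ : Fin n → ℤ) :
    g n j b μ =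
      ∑ γ ∈ (Finset.Nat.antidiagonalTuple (2 * n + 1) j).filter
          (fun γ => ∀ k : Fin n,
            (γ (⟨k, by have := k.isLt; omega⟩ : Fin (2 * n + 1)) : ℤ) -
              (γ (⟨2 * n - k, by omega⟩ : Fin (2 * n + 1)) : ℤ) = μ k),
        q ^ ((∑ i ∈ Finset.univ.filter (fun i : Fin (2 * n + 1) => (i : ℕ) ≠ n),
                (γ i : ℤ) * ((γ i : ℤ) - 1)) / 2 +
              ∑ i, H n b i * (γ i : ℤ)) *
          (qfac j / ∏ i, qfac (γ i)) := by
  have main : ∀ (j : ℕ) (b : Fin (2 * n + 1)) (μ : Fin n → ℤ), g n j b μ = RHS n j b μ := by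
    intro j
    induction j with
    | zero => intro b μ; rw [g_zero, RHS_zero]
    | succ k ih =>
      intro b μ
      rw [g_succ, RHS_succ]
      exact Finset.sum_congr rfl fun b' _ => by rw [ih]
  exact main j b μ

end
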